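/- The Rogers–Ramanujan identity holds: Σ_{n=0}^∞ q^{n²}/((1−q)(1−q²)⋯(1−qⁿ)) = ∏_{n≥1, n≡±1 mod 5} 1/(1−qⁿ), as an identity of formal power series in ℤ[[q]]. -/

import Mathlib

open PowerSeries Finset
set_option maxHeartbeats 1000000
set_option synthInstance.maxHeartbeats 400000

/-- The q-Pochhammer symbol `(q)_n = ∏_{i=1}^n (1 − qⁱ)` in `ℤ[[q]]`. -/
noncomputable def qPoch (n : ℕ) : PowerSeries ℤ :=
  ∏ i ∈ Finset.range n, (1 - (PowerSeries.X : PowerSeries ℤ) ^ (i + 1))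

namespace RR

noncomputable section

abbrev R := PowerSeries ℤ

/-- generalized Pochhammer with base exponent `b` -/
def poch (b n : ℕ) : R := ∏ i ∈ Finset.range n, (1 - X ^ (b * (i + 1)))

lemma isUnit_one_sub_X_pow (b : ℕ) (hb : 1 ≤ b) : IsUnit (1 - (X : R) ^ b) := by
  rw [PowerSeries.isUnit_iff_constantCoeff]
  have : constantCoeff ((X : R) ^ b) = 0 := by
    rw [← coeff_zero_eq_constantCoeff_apply, coeff_X_pow]
    omega
  simp [this]

lemma isUnit_poch (b n : ℕ) (hb : 1 ≤ b) : IsUnit (poch b n) := by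
  induction n with
  | zero => simp [poch]
  | succ n ih =>
      rw [poch, Finset.prod_range_succ, ← poch]
      exact ih.mul (isUnit_one_sub_X_pow _ (le_trans hb (Nat.le_mul_of_pos_right _ (by omega))))

lemma poch_succ (b n : ℕ) : poch b (n + 1) = poch b n * (1 - X ^ (b * (n + 1))) :=
  Finset.prod_range_succ _ _

lemma poch_zero (b : ℕ) : poch b 0 = 1 := rfl

/-- guarded Gaussian binomial with base `b`, as a power series -/
def Bi (b n k : ℕ) : R :=
  if k ≤ n then poch b n * Ring.inverse (poch b k) * Ring.inverse (poch b (n - k)) else 0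

lemma Bi_of_gt {b n k : ℕ} (h : n < k) : Bi b n k = 0 := by
  simp [Bi, Nat.not_le.mpr h]

lemma Bi_zero_right (b n : ℕ) : Bi b n 0 = poch b n * Ring.inverse (poch b n) := by
  simp [Bi, poch_zero]

lemma Bi_self (b n : ℕ) : Bi b n n = poch b n * Ring.inverse (poch b n) := by
  simp [Bi, poch_zero]

lemma Bi_zero_right' (b n : ℕ) (hb : 1 ≤ b) : Bi b n 0 = 1 := by
  rw [Bi_zero_right, Ring.mul_inverse_cancel _ (isUnit_poch b n hb)]

-- appended to w.lean inside namespace RR, noncomputable section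
abbrev FR := FractionRing R

def φ : R →+* FR := algebraMap R FR

lemma φ_inj {a b : R} (h : φ a = φ b) : a = b := IsFractionRing.injective R FR h

lemma φ_inv {u : R} (hu : IsUnit u) : φ (Ring.inverse u) = (φ u)⁻¹ := by
  have h1 : φ u * φ (Ring.inverse u) = 1 := by
    rw [← map_mul, Ring.mul_inverse_cancel _ hu, map_one]
  exact eq_inv_of_mul_eq_one_right h1

lemma φ_ne_zero {u : R} (hu : IsUnit u) : φ u ≠ 0 := by
  intro h
  have : (u : R) ≠ 0 := hu.ne_zero
  exact this (φ_inj (by simp [h, map_zero]))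

lemma pascalA (b n k : ℕ) (hb : 1 ≤ b) :
    Bi b (n+1) (k+1) = Bi b n (k+1) + X ^ (b*(n-k)) * Bi b n k := by
  rcases lt_or_ge n k with h | h
  · rw [Bi_of_gt (by omega), Bi_of_gt (by omega), Bi_of_gt (by omega)]
    simp
  rcases eq_or_lt_of_le h with rfl | hlt
  · rw [Bi_self, Bi_of_gt (by omega), Bi_self]
    simp [Nat.sub_self]
    rw [Ring.mul_inverse_cancel _ (isUnit_poch b _ hb), Ring.mul_inverse_cancel _ (isUnit_poch b _ hb)]
  -- main case k < n
  obtain ⟨m, rfl⟩ : ∃ m, n = k + (m + 1) := ⟨n - k - 1, by omega⟩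
  have hk : k + (m+1) - k = m + 1 := by omega
  have hk2 : k + (m+1) + 1 - (k+1) = m + 1 := by omega
  have hk3 : k + (m+1) - (k+1) = m := by omega
  rw [Bi, Bi, Bi, if_pos (by omega), if_pos (by omega), if_pos (by omega), hk, hk2, hk3]
  apply φ_inj
  have hub := fun n => isUnit_poch b n hb
  have hux := fun e he => isUnit_one_sub_X_pow e he
  simp only [map_add, map_mul, map_pow, φ_inv (hub _)]
  have hx : φ (poch b (k+1)) = φ (poch b k) * (1 - φ (X:R) ^ (b*(k+1))) := by
    rw [poch_succ]; simp
  have hy : φ (poch b (m+1)) = φ (poch b m) * (1 - φ (X:R) ^ (b*(m+1))) := by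
    rw [poch_succ]; simp
  have hz : φ (poch b (k+(m+1)+1))
      = φ (poch b (k+(m+1))) * (1 - φ (X:R) ^ (b*(k+1)) * φ (X:R) ^ (b*(m+1))) := by
    rw [poch_succ]; simp only [map_mul, map_sub, map_one, map_pow]
    rw [← pow_add, show b*(k+1) + b*(m+1) = b*(k+(m+1)+1) by ring]
  rw [hx, hy, hz]
  have n1 : φ (poch b k) ≠ 0 := φ_ne_zero (hub k)
  have n2 : φ (poch b m) ≠ 0 := φ_ne_zero (hub m)
  have n4 : (1 : FR) - φ (X:R) ^ (b*(k+1)) ≠ 0 := by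
    have := φ_ne_zero (hux (b*(k+1)) (by nlinarith))
    simpa using this
  have n5 : (1 : FR) - φ (X:R) ^ (b*(m+1)) ≠ 0 := by
    have := φ_ne_zero (hux (b*(m+1)) (by nlinarith))
    simpa using this
  field_simp
  ring
lemma pascalB (b n k : ℕ) (hb : 1 ≤ b) :
    Bi b (n+1) (k+1) = X ^ (b*(k+1)) * Bi b n (k+1) + Bi b n k := by
  rcases lt_or_ge n k with h | h
  · rw [Bi_of_gt (by omega), Bi_of_gt (by omega), Bi_of_gt (by omega)]
    simp
  rcases eq_or_lt_of_le h with rfl | hlt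
  · rw [Bi_self, Bi_of_gt (by omega), Bi_self]
    simp only [mul_zero, zero_add]
    rw [Ring.mul_inverse_cancel _ (isUnit_poch b _ hb), Ring.mul_inverse_cancel _ (isUnit_poch b _ hb)]
  -- main case k < n
  obtain ⟨m, rfl⟩ : ∃ m, n = k + (m + 1) := ⟨n - k - 1, by omega⟩
  have hk : k + (m+1) - k = m + 1 := by omega
  have hk2 : k + (m+1) + 1 - (k+1) = m + 1 := by omega
  have hk3 : k + (m+1) - (k+1) = m := by omega
  rw [Bi, Bi, Bi, if_pos (by omega), if_pos (by omega), if_pos (by omega), hk, hk2, hk3]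
  apply φ_inj
  have hub := fun n => isUnit_poch b n hb
  have hux := fun e he => isUnit_one_sub_X_pow e he
  simp only [map_add, map_mul, map_pow, φ_inv (hub _)]
  have hx : φ (poch b (k+1)) = φ (poch b k) * (1 - φ (X:R) ^ (b*(k+1))) := by
    rw [poch_succ]; simp
  have hy : φ (poch b (m+1)) = φ (poch b m) * (1 - φ (X:R) ^ (b*(m+1))) := by
    rw [poch_succ]; simp
  have hz : φ (poch b (k+(m+1)+1))
      = φ (poch b (k+(m+1))) * (1 - φ (X:R) ^ (b*(k+1)) * φ (X:R) ^ (b*(m+1))) := by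
    rw [poch_succ]; simp only [map_mul, map_sub, map_one, map_pow]
    rw [← pow_add, show b*(k+1) + b*(m+1) = b*(k+(m+1)+1) by ring]
  rw [hx, hy, hz]
  have n1 : φ (poch b k) ≠ 0 := φ_ne_zero (hub k)
  have n2 : φ (poch b m) ≠ 0 := φ_ne_zero (hub m)
  have n4 : (1 : FR) - φ (X:R) ^ (b*(k+1)) ≠ 0 := by
    have := φ_ne_zero (hux (b*(k+1)) (by nlinarith))
    simpa using this
  have n5 : (1 : FR) - φ (X:R) ^ (b*(m+1)) ≠ 0 := by
    have := φ_ne_zero (hux (b*(m+1)) (by nlinarith))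
    simpa using this
  field_simp
  ring


/-- congruence modulo `X^K` -/
def MD (K : ℕ) (a b : R) : Prop := (X : R) ^ K ∣ a - b

lemma MD.refl (K : ℕ) (a : R) : MD K a a := by simp [MD]

lemma MD.symm {K : ℕ} {a b : R} (h : MD K a b) : MD K b a := by
  simpa [MD, neg_sub] using (dvd_neg.mpr h)

lemma MD.trans {K : ℕ} {a b c : R} (h1 : MD K a b) (h2 : MD K b c) : MD K a c := by
  have := dvd_add h1 h2
  simpa [MD] using this

lemma MD.add {K : ℕ} {a b c d : R} (h1 : MD K a b) (h2 : MD K c d) :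
    MD K (a + c) (b + d) := by
  have := dvd_add h1 h2
  simpa [MD, sub_add_sub_comm] using this

lemma MD.mul {K : ℕ} {a b c d : R} (h1 : MD K a b) (h2 : MD K c d) :
    MD K (a * c) (b * d) := by
  have : a * c - b * d = (a - b) * c + b * (c - d) := by ring
  rw [MD, this]
  exact dvd_add (h1.mul_right c) (h2.mul_left b)

lemma MD.mul_left {K : ℕ} (c : R) {a b : R} (h : MD K a b) : MD K (c * a) (c * b) :=
  (MD.refl K c).mul h

lemma MD.mul_right {K : ℕ} (c : R) {a b : R} (h : MD K a b) : MD K (a * c) (b * c) :=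
  h.mul (MD.refl K c)

lemma MD_X_pow_mul {K e : ℕ} (he : K ≤ e) (a : R) : MD K (X ^ e * a) 0 := by
  rw [MD, sub_zero]
  exact Dvd.dvd.mul_right (pow_dvd_pow _ he) a

lemma MD_one_sub_X_pow {K e : ℕ} (he : K ≤ e) : MD K (1 - X ^ e) 1 := by
  have := MD_X_pow_mul he (-1 : R)
  rw [MD, sub_zero] at this
  rw [MD, show (1 : R) - X ^ e - 1 = X ^ e * (-1) by ring]
  exact this

lemma MD.sum {K : ℕ} {ι : Type*} {s : Finset ι} {f g : ι → R}
    (h : ∀ i ∈ s, MD K (f i) (g i)) :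
    MD K (∑ i ∈ s, f i) (∑ i ∈ s, g i) := by
  classical
  induction s using Finset.induction with
  | empty => simp [MD.refl]
  | insert _ _ hx ih =>
      rw [Finset.sum_insert hx, Finset.sum_insert hx]
      exact (h _ (Finset.mem_insert_self _ _)).add
        (ih fun i hi => h i (Finset.mem_insert_of_mem hi))

lemma MD.prod {K : ℕ} {ι : Type*} {s : Finset ι} {f g : ι → R}
    (h : ∀ i ∈ s, MD K (f i) (g i)) :
    MD K (∏ i ∈ s, f i) (∏ i ∈ s, g i) := by
  classical
  induction s using Finset.induction with
  | empty => simp [MD.refl]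
  | insert _ _ hx ih =>
      rw [Finset.prod_insert hx, Finset.prod_insert hx]
      exact (h _ (Finset.mem_insert_self _ _)).mul
        (ih fun i hi => h i (Finset.mem_insert_of_mem hi))

lemma MD.cancel {K : ℕ} {u a b : R} (hu : IsUnit u) (h : MD K (a * u) (b * u)) :
    MD K a b := by
  obtain ⟨c, hc⟩ := h
  refine ⟨c * Ring.inverse u, ?_⟩
  have : (a - b) * u = X ^ K * c := by rw [← hc]; ring
  calc a - b = (a - b) * u * Ring.inverse u := by
        rw [mul_assoc, Ring.mul_inverse_cancel _ hu, mul_one]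
    _ = X ^ K * (c * Ring.inverse u) := by rw [this]; ring

lemma MD.inv {K : ℕ} {u v : R} (hu : IsUnit u) (hv : IsUnit v) (h : MD K u v) :
    MD K (Ring.inverse u) (Ring.inverse v) := by
  obtain ⟨c, hc⟩ := h
  have h1 : v * Ring.inverse v = 1 := Ring.mul_inverse_cancel _ hv
  have h2 : Ring.inverse u * u = 1 := Ring.inverse_mul_cancel _ hu
  refine ⟨Ring.inverse u * (-c) * Ring.inverse v, ?_⟩
  have key : Ring.inverse u - Ring.inverse v
      = Ring.inverse u * ((v - u) * Ring.inverse v) := by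
    calc Ring.inverse u - Ring.inverse v
        = Ring.inverse u * (v * Ring.inverse v) - (Ring.inverse u * u) * Ring.inverse v := by
          rw [h1, h2]; ring
      _ = Ring.inverse u * ((v - u) * Ring.inverse v) := by ring
  rw [key, show v - u = X ^ K * (-c) by rw [show (X:R) ^ K * (-c) = -(X ^ K * c) by ring, ← hc]; ring]
  ring

lemma MD_coeff {N : ℕ} {a b : R} (h : MD (N + 1) a b) :
    (PowerSeries.coeff (R := ℤ) N) a = (PowerSeries.coeff (R := ℤ) N) b := by
  have := (PowerSeries.X_pow_dvd_iff).mp h N (by omega)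
  rw [map_sub] at this
  linarith


/-! ### signs and pentagonal-type exponents -/

def eps (j : ℤ) : R := if Even j then 1 else -1

lemma eps_add_one (j : ℤ) : eps (j + 1) = - eps j := by
  by_cases h : Even j
  · simp [eps, h, Int.even_add_one]
  · simp [eps, h, Int.even_add_one]

lemma eps_sub_one (j : ℤ) : eps (j - 1) = - eps j := by
  have := eps_add_one (j - 1)
  simp at this
  rw [this]; ring

def tt (j : ℤ) : ℕ := (j * (5 * j + 1) / 2).toNat

lemma tt_nonneg (j : ℤ) : 0 ≤ j * (5 * j + 1) := by
  rcases le_or_gt 0 j with h | h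
  · positivity
  · nlinarith

lemma tt_dvd (j : ℤ) : (2 : ℤ) ∣ j * (5 * j + 1) := by
  have h1 : j * (5 * j + 1) = 4 * (j * j) + j * (j + 1) := by ring
  rw [h1]
  exact dvd_add ⟨2 * (j * j), by ring⟩ (Int.even_mul_succ_self j).two_dvd

lemma ttZ (j : ℤ) : 2 * (tt j : ℤ) = j * (5 * j + 1) := by
  rw [tt, Int.toNat_of_nonneg (Int.ediv_nonneg (tt_nonneg j) (by norm_num))]
  rw [mul_comm]
  exact Int.ediv_mul_cancel (tt_dvd j)

/-! ### window sums over `Icc` in ℤ -/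

lemma sum_shift (a b c : ℤ) (f : ℤ → R) :
    ∑ j ∈ Finset.Icc (a + c) (b + c), f j = ∑ j ∈ Finset.Icc a b, f (j + c) := by
  rw [← Finset.map_add_right_Icc, Finset.sum_map]
  rfl

lemma sum_window {f : ℤ → R} {J J' : ℤ} (h : J' ≤ J)
    (hv : ∀ j : ℤ, j < -J' ∨ J' < j → f j = 0) :
    ∑ j ∈ Finset.Icc (-J) J, f j = ∑ j ∈ Finset.Icc (-J') J', f j := by
  refine (Finset.sum_subset (Finset.Icc_subset_Icc (by omega) h) ?_).symm
  intro x hx hnx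
  simp only [Finset.mem_Icc] at hx hnx
  exact hv x (by omega)

/-! ### the Jacobi-triple-product-type identity -/

def ue (n : ℕ) (j : ℤ) : R :=
  if -(n:ℤ) ≤ j then eps j * X ^ tt j * Bi 5 (2*n) ((n + j).toNat) else 0

def uo (n : ℕ) (j : ℤ) : R :=
  if -(n:ℤ) - 1 ≤ j then eps j * X ^ tt j * Bi 5 (2*n+1) (((n:ℤ) + 1 + j).toNat) else 0

def wa (n : ℕ) (j : ℤ) : R :=
  if -(n:ℤ) - 1 ≤ j then
    eps j * X ^ (tt j + 5 * (((n:ℤ) + 1 + j).toNat)) * Bi 5 (2*n) (((n:ℤ) + 1 + j).toNat)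
  else 0

def wb (n : ℕ) (j : ℤ) : R :=
  if -(n:ℤ) ≤ j then
    eps j * X ^ (tt j + 5 * (((n:ℤ) + 1 - j).toNat)) * Bi 5 (2*n+1) (((n:ℤ) + j).toNat)
  else 0

lemma ue_vanish (n : ℕ) (j : ℤ) (h : j < -(n:ℤ) ∨ (n:ℤ) < j) : ue n j = 0 := by
  rcases h with h | h
  · rw [ue, if_neg (by omega)]
  · rw [ue]
    split
    · rw [Bi_of_gt (by omega), mul_zero]
    · rfl

lemma uo_vanish (n : ℕ) (j : ℤ) (h : j < -(n:ℤ) - 1 ∨ (n:ℤ) < j) : uo n j = 0 := by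
  rcases h with h | h
  · rw [uo, if_neg (by omega)]
  · rw [uo]
    split
    · rw [Bi_of_gt (by omega), mul_zero]
    · rfl

lemma step_a (n : ℕ) (j : ℤ) (hj : -(n:ℤ) - 1 ≤ j) :
    uo n j = ue n j + wa n j := by
  rcases eq_or_lt_of_le hj with rfl | hj'
  · -- j = -(n+1)
    rw [uo, if_pos le_rfl, wa, if_pos le_rfl, ue, if_neg (by omega)]
    have h0 : ((n:ℤ) + 1 + (-(n:ℤ) - 1)).toNat = 0 := by omega
    rw [h0]
    simp [Bi_zero_right' 5 _ (by norm_num)]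
  · -- j ≥ -n
    have hj2 : -(n:ℤ) ≤ j := by omega
    rw [uo, if_pos hj, wa, if_pos hj, ue, if_pos hj2]
    have hk : ((n:ℤ) + 1 + j).toNat = ((n:ℤ) + j).toNat + 1 := by omega
    rw [hk, pascalB 5 (2*n) ((n + j).toNat) (by norm_num)]
    have he : 5 * (((n:ℤ) + j).toNat + 1) = 5 * (((n:ℤ) + 1 + j).toNat) := by omega
    rw [he, pow_add]
    ring

lemma step_a_shift (n : ℕ) (j : ℤ) :
    wa n (j - 1) = - (X ^ (5*n+2) * ue n j) := by
  by_cases hj : -(n:ℤ) ≤ j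
  · rw [wa, if_pos (by omega), ue, if_pos hj, eps_sub_one]
    have hk : ((n:ℤ) + 1 + (j - 1)).toNat = ((n:ℤ) + j).toNat := by omega
    rw [hk]
    have he : tt (j - 1) + 5 * (((n:ℤ) + j).toNat) = tt j + (5*n+2) := by
      have h1 : 2 * (tt j : ℤ) - 2 * (tt (j-1) : ℤ) = 10 * j - 4 := by
        have a1 := ttZ j
        have a2 := ttZ (j - 1)
        linarith [a1, a2, show j*(5*j+1) - (j-1)*(5*(j-1)+1) = 10*j - 4 by ring]
      omega
    rw [he, pow_add]
    ring
  · rw [wa, if_neg (by omega), ue, if_neg hj]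
    ring

lemma step_b (n : ℕ) (j : ℤ) (hj : -(n:ℤ) - 1 ≤ j) :
    ue (n+1) j = uo n j + wb n j := by
  rcases eq_or_lt_of_le hj with rfl | hj'
  · rw [ue, if_pos (by push_cast; omega), uo, if_pos le_rfl, wb, if_neg (by omega)]
    have h0 : (((n:ℕ):ℤ) + 1 + (-(n:ℤ) - 1)).toNat = 0 := by omega
    have h0' : (((n+1:ℕ):ℤ) + (-(n:ℤ) - 1)).toNat = 0 := by push_cast; omega
    rw [h0, h0']
    simp [Bi_zero_right' 5 _ (by norm_num)]
  · have hj2 : -(n:ℤ) ≤ j := by omega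
    rcases le_or_gt j ((n:ℤ)+1) with hjn | hjn
    · rw [ue, if_pos (by push_cast; omega), uo, if_pos hj, wb, if_pos hj2]
      have hk : (((n+1:ℕ):ℤ) + j).toNat = ((n:ℤ) + j).toNat + 1 := by push_cast; omega
      have hk2 : ((n:ℤ) + 1 + j).toNat = ((n:ℤ) + j).toNat + 1 := by omega
      rw [hk, hk2]
      have h2 : 2*(n+1) = (2*n+1) + 1 := by ring
      rw [h2, pascalA 5 (2*n+1) ((n + j).toNat) (by norm_num)]
      have he : 5 * (2*n+1 - ((n:ℤ) + j).toNat) = 5 * (((n:ℤ) + 1 - j).toNat) := by omega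
      rw [he]
      ring
    · -- j > n+1 : everything vanishes
      rw [ue_vanish (n+1) j (by push_cast; omega), uo_vanish n j (by omega), wb,
        if_pos hj2, Bi_of_gt (by omega)]
      ring

lemma step_b_shift (n : ℕ) (j : ℤ) :
    wb n (j + 1) = - (X ^ (5*n+3) * uo n j) := by
  by_cases hj : -(n:ℤ) - 1 ≤ j
  · rcases le_or_gt j (n:ℤ) with hjn | hjn
    · rw [wb, if_pos (by omega), uo, if_pos hj, eps_add_one]
      have hk : ((n:ℤ) + (j + 1)).toNat = ((n:ℤ) + 1 + j).toNat := by omega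
      rw [hk]
      have he : tt (j + 1) + 5 * (((n:ℤ) + 1 - (j+1)).toNat) = tt j + (5*n+3) := by
        have h1 : 2 * (tt (j+1) : ℤ) - 2 * (tt j : ℤ) = 10 * j + 6 := by
          have a1 := ttZ j
          have a2 := ttZ (j + 1)
          linarith [a1, a2, show (j+1)*(5*(j+1)+1) - j*(5*j+1) = 10*j + 6 by ring]
        omega
      rw [he, pow_add]
      ring
    · rw [wb, if_pos (by omega), uo_vanish n j (by omega), Bi_of_gt (by omega)]
      ring
  · rw [wb, if_neg (by omega), uo, if_neg (by omega)]
    ring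


lemma step_a' (n : ℕ) (j : ℤ) : uo n j = ue n j + wa n j := by
  rcases le_or_gt (-(n:ℤ) - 1) j with h | h
  · exact step_a n j h
  · rw [uo, if_neg (by omega), ue, if_neg (by omega), wa, if_neg (by omega)]
    ring

lemma step_b' (n : ℕ) (j : ℤ) : ue (n+1) j = uo n j + wb n j := by
  rcases le_or_gt (-(n:ℤ) - 1) j with h | h
  · exact step_b n j h
  · rw [ue, if_neg (by push_cast; omega), uo, if_neg (by omega), wb, if_neg (by omega)]
    ring

lemma sum_window' {f : ℤ → R} {a b a' b' : ℤ} (h1 : a ≤ a') (h2 : b' ≤ b)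
    (hv : ∀ j : ℤ, j < a' ∨ b' < j → f j = 0) :
    ∑ j ∈ Finset.Icc a b, f j = ∑ j ∈ Finset.Icc a' b', f j := by
  refine (Finset.sum_subset (Finset.Icc_subset_Icc h1 h2) ?_).symm
  intro x hx hnx
  simp only [Finset.mem_Icc] at hx hnx
  exact hv x (by omega)

def Vprod (n : ℕ) : R := ∏ i ∈ Finset.range n, ((1 - X ^ (5*i+2)) * (1 - X ^ (5*i+3)))

lemma jtp (n : ℕ) :
    ∑ j ∈ Finset.Icc (-(n:ℤ) - 1) ((n:ℤ) + 1), ue n j = Vprod n := by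
  induction n with
  | zero =>
      rw [sum_window' (a' := 0) (b' := 0) (by norm_num) (by norm_num)
        (fun j hj => ue_vanish 0 j (by push_cast; omega))]
      rw [Finset.Icc_self, Finset.sum_singleton, ue, if_pos (by norm_num)]
      have h0 : ((0:ℕ) + (0:ℤ)).toNat = 0 := by norm_num
      have h1 : tt 0 = 0 := by norm_num [tt]
      rw [h0, Bi_zero_right' 5 _ (by norm_num), h1]
      norm_num [eps, Vprod]
  | succ n ih =>
      have key : ∑ j ∈ Finset.Icc (-((n:ℤ)+1) - 1) (((n:ℤ)+1) + 1), ue (n+1) j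
          = (1 - X ^ (5*n+3)) * ∑ j ∈ Finset.Icc (-(n:ℤ) - 1) ((n:ℤ) + 1), uo n j := by
        have e1 : ∀ j ∈ Finset.Icc (-((n:ℤ)+1) - 1) (((n:ℤ)+1) + 1),
            ue (n+1) j = uo n j + wb n j := fun j _ => step_b' n j
        rw [Finset.sum_congr rfl e1, Finset.sum_add_distrib]
        have e2 := sum_shift (-((n:ℤ)+1) - 2) ((n:ℤ) + 1) 1 (wb n)
        rw [show -((n:ℤ)+1) - 2 + 1 = -((n:ℤ)+1) - 1 by ring,
            show (n:ℤ) + 1 + 1 = ((n:ℤ)+1) + 1 by ring] at e2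
        rw [e2]
        have e3 : ∀ j ∈ Finset.Icc (-((n:ℤ)+1) - 2) ((n:ℤ) + 1),
            wb n (j + 1) = - (X ^ (5*n+3) * uo n j) := fun j _ => step_b_shift n j
        rw [Finset.sum_congr rfl e3]
        have e4 : ∑ j ∈ Finset.Icc (-((n:ℤ)+1) - 2) ((n:ℤ) + 1), - (X ^ (5*n+3) * uo n j)
            = - (X ^ (5*n+3) * ∑ j ∈ Finset.Icc (-((n:ℤ)+1) - 2) ((n:ℤ) + 1), uo n j) := by
          simp [Finset.mul_sum]
        rw [e4]
        have w1 : ∑ j ∈ Finset.Icc (-((n:ℤ)+1) - 2) ((n:ℤ) + 1), uo n j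
            = ∑ j ∈ Finset.Icc (-(n:ℤ) - 1) ((n:ℤ) + 1), uo n j :=
          sum_window' (by omega) (by omega) (fun j hj => uo_vanish n j (by omega))
        have w2 : ∑ j ∈ Finset.Icc (-((n:ℤ)+1) - 1) (((n:ℤ)+1) + 1), uo n j
            = ∑ j ∈ Finset.Icc (-(n:ℤ) - 1) ((n:ℤ) + 1), uo n j :=
          sum_window' (by omega) (by omega) (fun j hj => uo_vanish n j (by omega))
        rw [w1, w2]
        ring
      have key2 : ∑ j ∈ Finset.Icc (-(n:ℤ) - 1) ((n:ℤ) + 1), uo n j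
          = (1 - X ^ (5*n+2)) * ∑ j ∈ Finset.Icc (-(n:ℤ) - 1) ((n:ℤ) + 1), ue n j := by
        have e1 : ∀ j ∈ Finset.Icc (-(n:ℤ) - 1) ((n:ℤ) + 1),
            uo n j = ue n j + wa n j := fun j _ => step_a' n j
        rw [Finset.sum_congr rfl e1, Finset.sum_add_distrib]
        have e2 := sum_shift (-(n:ℤ)) ((n:ℤ) + 2) (-1) (wa n)
        rw [show -(n:ℤ) + (-1) = -(n:ℤ) - 1 by ring,
            show (n:ℤ) + 2 + (-1) = (n:ℤ) + 1 by ring] at e2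
        rw [e2]
        have e3 : ∀ j ∈ Finset.Icc (-(n:ℤ)) ((n:ℤ) + 2),
            wa n (j + (-1)) = - (X ^ (5*n+2) * ue n j) := by
          intro j _
          rw [show j + (-1:ℤ) = j - 1 by ring]
          exact step_a_shift n j
        rw [Finset.sum_congr rfl e3]
        have e4 : ∑ j ∈ Finset.Icc (-(n:ℤ)) ((n:ℤ) + 2), - (X ^ (5*n+2) * ue n j)
            = - (X ^ (5*n+2) * ∑ j ∈ Finset.Icc (-(n:ℤ)) ((n:ℤ) + 2), ue n j) := by
          simp [Finset.mul_sum]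
        rw [e4]
        have w1 : ∑ j ∈ Finset.Icc (-(n:ℤ)) ((n:ℤ) + 2), ue n j
            = ∑ j ∈ Finset.Icc (-(n:ℤ)) ((n:ℤ)), ue n j :=
          sum_window' (by omega) (by omega) (fun j hj => ue_vanish n j (by omega))
        have w2 : ∑ j ∈ Finset.Icc (-(n:ℤ) - 1) ((n:ℤ) + 1), ue n j
            = ∑ j ∈ Finset.Icc (-(n:ℤ)) ((n:ℤ)), ue n j :=
          sum_window' (by omega) (by omega) (fun j hj => ue_vanish n j (by omega))
        rw [w1, ← w2]
        ring
      have hcast : -((n+1:ℕ):ℤ) - 1 = -((n:ℤ)+1) - 1 := by push_cast; ring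
      have hcast2 : (((n+1:ℕ)):ℤ) + 1 = ((n:ℤ)+1) + 1 := by push_cast; ring
      rw [hcast, hcast2, key, key2, ih]
      simp only [Vprod, Finset.prod_range_succ]
      ring


/-! ### Schur's polynomial identity -/

def hh (M : ℕ) (j : ℤ) : ℕ := (((M:ℤ) - 5*j).toNat) / 2

def tm (M : ℕ) (j : ℤ) : R :=
  if 5*j ≤ (M:ℤ) then eps j * X ^ tt j * Bi 1 M (hh M j) else 0

lemma tt_step (j : ℤ) : 2 * (tt (j+1) : ℤ) = 2 * (tt j : ℤ) + 10*j + 6 := by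
  have a1 := ttZ j
  have a2 := ttZ (j + 1)
  linarith [a1, a2, show (j+1)*(5*(j+1)+1) - j*(5*j+1) = 10*j + 6 by ring]

lemma tm_vanish_right (M : ℕ) (j : ℤ) (h : (M:ℤ) < 5*j) : tm M j = 0 := by
  rw [tm, if_neg (by omega)]

lemma tm_vanish_left (M : ℕ) (j : ℤ) (h : 5*j ≤ -(M:ℤ) - 2) : tm M j = 0 := by
  rw [tm]
  split
  · rw [Bi_of_gt (show M < hh M j by unfold hh; omega), mul_zero]
  · rfl

/-- defect of the three-term recurrence -/
def F (M : ℕ) (j : ℤ) : R := tm (M+2) j - tm (M+1) j - X^(M+1) * tm M j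

lemma defect_even (M : ℕ) (j : ℤ) (hev : (2:ℤ) ∣ ((M:ℤ) - 5*j)) (hge : -2 ≤ (M:ℤ) - 5*j) :
    F M j = eps j * X ^ (tt j + hh (M+2) j) * Bi 1 M (hh (M+2) j) := by
  rcases eq_or_lt_of_le hge with heq | hlt
  · -- s = -2
    have g1 : 5*j ≤ ((M+2:ℕ):ℤ) := by push_cast; omega
    have g2 : ¬ (5*j ≤ ((M+1:ℕ):ℤ)) := by push_cast; omega
    have g3 : ¬ (5*j ≤ (M:ℤ)) := by omega
    have h0 : hh (M+2) j = 0 := by unfold hh; push_cast; omega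
    rw [F, tm, tm, tm, if_pos g1, if_neg g2, if_neg g3, h0,
      Bi_zero_right' 1 _ le_rfl, Bi_zero_right' 1 _ le_rfl]
    ring
  · -- s ≥ 0
    have g1 : 5*j ≤ ((M+2:ℕ):ℤ) := by push_cast; omega
    have g2 : 5*j ≤ ((M+1:ℕ):ℤ) := by push_cast; omega
    have g3 : 5*j ≤ (M:ℤ) := by omega
    set h := hh (M+2) j with hhdef
    have hP : 2 * (h:ℤ) = (M:ℤ) - 5*j + 2 := by rw [hhdef]; unfold hh; push_cast; omega
    have h1 : 1 ≤ h := by omega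
    have hM1 : hh (M+1) j = h - 1 := by unfold hh; push_cast; omega
    have hM0 : hh M j = h - 1 := by unfold hh; omega
    rw [F, tm, tm, tm, if_pos g1, if_pos g2, if_pos g3, hM1, hM0]
    have hsplit : h = (h - 1) + 1 := by omega
    rw [show Bi 1 (M+2) h = Bi 1 ((M+1)+1) ((h-1)+1) by rw [← hsplit],
      pascalB 1 (M+1) (h-1) le_rfl,
      show Bi 1 (M+1) ((h-1)+1) = Bi 1 (M+1) h by rw [← hsplit],
      show Bi 1 (M+1) h = Bi 1 (M+1) ((h-1)+1) by rw [← hsplit],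
      pascalA 1 M (h-1) le_rfl,
      show Bi 1 M ((h-1)+1) = Bi 1 M h by rw [← hsplit]]
    rcases le_or_gt (h-1) M with hc | hc
    · have e1 : (1*((h-1)+1)) + (1*(M-(h-1))) = M+1 := by omega
      rw [show (X:R) ^ (1*((h-1)+1)) * (Bi 1 M h + X ^ (1*(M-(h-1))) * Bi 1 M (h-1))
          = X ^ (1*((h-1)+1)) * Bi 1 M h + X ^ (M+1) * Bi 1 M (h-1) by
        rw [mul_add, ← mul_assoc, ← pow_add, e1]]
      have e2 : 1*((h-1)+1) = h := by omega
      rw [e2, show tt j + h = tt j + h by rfl, pow_add]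
      ring
    · rw [Bi_of_gt hc, Bi_of_gt (show M < h by omega)]
      ring

lemma defect_even_vanish (M : ℕ) (j : ℤ) (hle : (M:ℤ) - 5*j ≤ -4) : F M j = 0 := by
  rw [F, tm_vanish_right _ _ (by push_cast; omega), tm_vanish_right _ _ (by push_cast; omega),
    tm_vanish_right _ _ (by omega)]
  ring

lemma defect_odd (M : ℕ) (j : ℤ) (hev : ¬ (2:ℤ) ∣ ((M:ℤ) - 5*j)) (hge : 3 ≤ (M:ℤ) - 5*j) :
    F M j = eps j * X ^ (tt j + (M + 2 - hh (M+2) j)) * Bi 1 M (hh (M+2) j - 2) := by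
  have g1 : 5*j ≤ ((M+2:ℕ):ℤ) := by push_cast; omega
  have g2 : 5*j ≤ ((M+1:ℕ):ℤ) := by push_cast; omega
  have g3 : 5*j ≤ (M:ℤ) := by omega
  set h := hh (M+2) j with hhdef
  have hP : 2 * (h:ℤ) = (M:ℤ) - 5*j + 1 := by rw [hhdef]; unfold hh; push_cast; omega
  have h2 : 2 ≤ h := by omega
  have hM1 : hh (M+1) j = h := by unfold hh; push_cast; omega
  have hM0 : hh M j = h - 1 := by unfold hh; omega
  rw [F, tm, tm, tm, if_pos g1, if_pos g2, if_pos g3, hM1, hM0]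
  rw [show Bi 1 (M+2) h = Bi 1 ((M+1)+1) ((h-1)+1) by rw [show (h-1)+1 = h by omega],
    pascalA 1 (M+1) (h-1) le_rfl,
    show Bi 1 (M+1) ((h-1)+1) = Bi 1 (M+1) h by rw [show (h-1)+1 = h by omega],
    show Bi 1 (M+1) (h-1) = Bi 1 (M+1) ((h-2)+1) by rw [show (h-2)+1 = h-1 by omega],
    pascalB 1 M (h-2) le_rfl,
    show Bi 1 M ((h-2)+1) = Bi 1 M (h-1) by rw [show (h-2)+1 = h-1 by omega]]
  rcases le_or_gt h (M+2) with hc | hc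
  · have e1 : (1*((M+1)-(h-1))) + (1*((h-2)+1)) = M+1 := by omega
    rw [show (X:R) ^ (1*((M+1)-(h-1))) * (X ^ (1*((h-2)+1)) * Bi 1 M (h-1) + Bi 1 M (h-2))
        = X ^ (M+1) * Bi 1 M (h-1) + X ^ (1*((M+1)-(h-1))) * Bi 1 M (h-2) by
      rw [mul_add, ← mul_assoc, ← pow_add, e1]]
    have e2 : 1*((M+1)-(h-1)) = M + 2 - h := by omega
    rw [e2, pow_add]
    ring
  · rw [Bi_of_gt (show M < h - 1 by omega), Bi_of_gt (show M < h - 2 by omega)]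
    ring

lemma defect_odd_vanish (M : ℕ) (j : ℤ) (hev : ¬ (2:ℤ) ∣ ((M:ℤ) - 5*j))
    (hle : (M:ℤ) - 5*j ≤ 1) : F M j = 0 := by
  rcases eq_or_lt_of_le hle with heq | hlt
  · -- s = 1
    have g1 : 5*j ≤ ((M+2:ℕ):ℤ) := by push_cast; omega
    have g2 : 5*j ≤ ((M+1:ℕ):ℤ) := by push_cast; omega
    have g3 : 5*j ≤ (M:ℤ) := by omega
    have hP : hh (M+2) j = 1 := by unfold hh; push_cast; omega
    have hM1 : hh (M+1) j = 1 := by unfold hh; push_cast; omega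
    have hM0 : hh M j = 0 := by unfold hh; omega
    rw [F, tm, tm, tm, if_pos g1, if_pos g2, if_pos g3, hP, hM1, hM0]
    rw [show Bi 1 (M+2) 1 = Bi 1 ((M+1)+1) (0+1) by norm_num,
      pascalA 1 (M+1) 0 le_rfl,
      show Bi 1 (M+1) (0+1) = Bi 1 (M+1) 1 by norm_num,
      Bi_zero_right' 1 (M+1) le_rfl, Bi_zero_right' 1 M le_rfl]
    have e2 : 1*((M+1)-0) = M + 1 := by omega
    rw [e2]
    ring
  · rcases lt_or_ge ((M:ℤ) - 5*j) (-1) with hlt2 | hge2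
    · -- s ≤ -3
      rw [F, tm_vanish_right _ _ (by push_cast; omega),
        tm_vanish_right _ _ (by push_cast; omega), tm_vanish_right _ _ (by omega)]
      ring
    · -- s = -1
      have hs : (M:ℤ) - 5*j = -1 := by omega
      have g1 : 5*j ≤ ((M+2:ℕ):ℤ) := by push_cast; omega
      have g2 : 5*j ≤ ((M+1:ℕ):ℤ) := by push_cast; omega
      have g3 : ¬ (5*j ≤ (M:ℤ)) := by omega
      have hP : hh (M+2) j = 0 := by unfold hh; push_cast; omega
      have hM1 : hh (M+1) j = 0 := by unfold hh; push_cast; omega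
      rw [F, tm, tm, tm, if_pos g1, if_pos g2, if_neg g3, hP, hM1,
        Bi_zero_right' 1 _ le_rfl, Bi_zero_right' 1 _ le_rfl]
      ring

lemma pair_cancel (M : ℕ) (j : ℤ) (hodd : ¬ (2:ℤ) ∣ ((M:ℤ) - 5*j)) :
    F M j + F M (j+1) = 0 := by
  rcases le_or_gt 3 ((M:ℤ) - 5*j) with hge | hlt
  · have hev' : (2:ℤ) ∣ ((M:ℤ) - 5*(j+1)) := by omega
    rw [defect_odd M j hodd hge, defect_even M (j+1) hev' (by omega)]
    set h := hh (M+2) j with hhdef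
    have hP : 2 * (h:ℤ) = (M:ℤ) - 5*j + 1 := by rw [hhdef]; unfold hh; push_cast; omega
    have h2 : 2 ≤ h := by omega
    have hP' : hh (M+2) (j+1) = h - 2 := by unfold hh; push_cast; omega
    rw [hP', eps_add_one]
    rcases le_or_gt (h-2) M with hc | hc
    · have he : tt (j+1) + (h - 2) = tt j + (M + 2 - h) := by
        have := tt_step j
        omega
      rw [he]
      ring
    · rw [Bi_of_gt hc]
      ring
  · have hev' : (M:ℤ) - 5*(j+1) ≤ -4 := by omega
    rw [defect_odd_vanish M j hodd (by omega), defect_even_vanish M (j+1) hev']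
    ring


lemma sum_Icc_eq_range (a : ℤ) (T : ℕ) (f : ℤ → R) :
    ∑ j ∈ Finset.Icc a (a + T - 1), f j = ∑ i ∈ Finset.range T, f (a + i) := by
  induction T with
  | zero =>
      rw [Finset.range_zero, Finset.sum_empty, Finset.Icc_eq_empty (by omega), Finset.sum_empty]
  | succ T ih =>
      have hins : Finset.Icc a (a + (T+1:ℕ) - 1) = insert (a + T) (Finset.Icc a (a + T - 1)) := by
        ext x
        simp only [Finset.mem_Icc, Finset.mem_insert]
        push_cast
        omega
      rw [hins, Finset.sum_insert (by simp only [Finset.mem_Icc]; omega), ih,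
        Finset.sum_range_succ]
      exact add_comm _ _

def g_aux (f : ℤ → R) (a : ℤ) (i : ℕ) : R := f (a + i)

lemma sum_range_pair (T : ℕ) (g : ℕ → R) :
    ∑ i ∈ Finset.range (2*T), g i = ∑ i ∈ Finset.range T, (g (2*i) + g (2*i+1)) := by
  induction T with
  | zero => simp
  | succ T ih =>
      rw [show 2*(T+1) = (2*T + 1) + 1 by ring, Finset.sum_range_succ, Finset.sum_range_succ,
        ih, Finset.sum_range_succ]
      ring

lemma sum_pair (a : ℤ) (T : ℕ) (f : ℤ → R) :
    ∑ j ∈ Finset.Icc a (a + 2*T - 1), f j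
      = ∑ i ∈ Finset.range T, (f (a + 2*i) + f (a + 2*i + 1)) := by
  have h := sum_Icc_eq_range a (2*T) f
  rw [show a + ((2*T:ℕ):ℤ) - 1 = a + 2*T - 1 by push_cast; ring] at h
  rw [h]
  have h2 := sum_range_pair T (g_aux f a)
  simp only [g_aux] at h2
  rw [h2]
  refine Finset.sum_congr rfl ?_
  intro i _
  rw [show a + ((2*i:ℕ):ℤ) = a + 2*(i:ℤ) by push_cast; ring,
    show a + ((2*i+1:ℕ):ℤ) = a + 2*(i:ℤ) + 1 by push_cast; ring]

def ES (M : ℕ) : R := ∑ j ∈ Finset.Icc (-(M:ℤ) - 1) ((M:ℤ) + 1), tm M j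

lemma ES_window (M : ℕ) {a b : ℤ} (ha : a ≤ -(M:ℤ)) (hb : (M:ℤ) ≤ b) :
    ∑ j ∈ Finset.Icc a b, tm M j = ES M := by
  have hv : ∀ j : ℤ, j < -(M:ℤ) ∨ (M:ℤ) < j → tm M j = 0 := by
    intro j hj
    rcases hj with hj | hj
    · exact tm_vanish_left M j (by omega)
    · exact tm_vanish_right M j (by omega)
  have w1 : ∑ j ∈ Finset.Icc a b, tm M j = ∑ j ∈ Finset.Icc (-(M:ℤ)) ((M:ℤ)), tm M j := by
    refine (Finset.sum_subset (Finset.Icc_subset_Icc ha hb) ?_).symm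
    intro x hx hnx
    simp only [Finset.mem_Icc] at hx hnx
    exact hv x (by omega)
  have w2 : ES M = ∑ j ∈ Finset.Icc (-(M:ℤ)) ((M:ℤ)), tm M j :=
    sum_window' (by omega) (by omega) hv
  rw [w1, ← w2]

lemma ES_rec (M : ℕ) : ES (M+2) = ES (M+1) + X^(M+1) * ES M := by
  have hzero : ∑ j ∈ Finset.Icc (-(M:ℤ)-3) ((M:ℤ)+4), F M j = 0 := by
    have h := sum_pair (-(M:ℤ)-3) (M+4) (F M)
    rw [show -(M:ℤ)-3 + 2*((M+4:ℕ):ℤ) - 1 = (M:ℤ)+4 by push_cast; ring] at h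
    rw [h]
    refine Finset.sum_eq_zero ?_
    intro i _
    exact pair_cancel M _ (by omega)
  have hsplit : ∀ j ∈ Finset.Icc (-(M:ℤ)-3) ((M:ℤ)+4),
      F M j = tm (M+2) j - tm (M+1) j - X^(M+1) * tm M j := fun j _ => rfl
  rw [Finset.sum_congr rfl hsplit] at hzero
  rw [Finset.sum_sub_distrib, Finset.sum_sub_distrib, ← Finset.mul_sum] at hzero
  rw [ES_window (M+2) (by push_cast; omega) (by push_cast; omega),
    ES_window (M+1) (by push_cast; omega) (by push_cast; omega),
    ES_window M (by push_cast; omega) (by push_cast; omega)] at hzero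
  linear_combination hzero

def DS (M : ℕ) : R := ∑ n ∈ Finset.range (M+1), X^(n^2) * Bi 1 (M - n) n

lemma DS_rec (M : ℕ) : DS (M+2) = DS (M+1) + X^(M+1) * DS M := by
  have l1 : DS (M+2) = (∑ i ∈ Finset.range (M+2), X^((i+1)^2) * Bi 1 (M+2-(i+1)) (i+1)) + 1 := by
    rw [DS, Finset.sum_range_succ']
    congr 1
    simp [Bi_zero_right' 1 _ le_rfl]
  have l2 : ∑ i ∈ Finset.range (M+2), X^((i+1)^2) * Bi 1 (M+2-(i+1)) (i+1)
      = ∑ i ∈ Finset.range (M+1), X^((i+1)^2) * Bi 1 (M+2-(i+1)) (i+1) := by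
    rw [Finset.sum_range_succ, Bi_of_gt (by omega), mul_zero, add_zero]
  have l3 : ∀ i ∈ Finset.range (M+1),
      X^((i+1)^2) * Bi 1 (M+2-(i+1)) (i+1)
        = X^((i+1)^2) * Bi 1 (M-i) (i+1) + X^((i+1)^2) * (X^(1*((M-i)-i)) * Bi 1 (M-i) i) := by
    intro i hi
    simp only [Finset.mem_range] at hi
    rw [show M+2-(i+1) = (M-i)+1 by omega, pascalA 1 (M-i) i le_rfl]
    ring
  have l4 : ∀ i ∈ Finset.range (M+1),
      X^((i+1)^2) * (X^(1*((M-i)-i)) * Bi 1 (M-i) i)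
        = X^(M+1) * (X^(i^2) * Bi 1 (M-i) i) := by
    intro i hi
    simp only [Finset.mem_range] at hi
    rcases le_or_gt (2*i) M with hc | hc
    · rw [← mul_assoc, ← mul_assoc, ← pow_add, ← pow_add]
      congr 2
      have : (i+1)^2 = i^2 + 2*i + 1 := by ring
      omega
    · rw [Bi_of_gt (by omega)]
      ring
  have l5 : DS (M+1) = (∑ i ∈ Finset.range (M+1), X^((i+1)^2) * Bi 1 (M-i) (i+1)) + 1 := by
    rw [DS, Finset.sum_range_succ']
    congr 1
    · refine Finset.sum_congr rfl ?_
      intro i hi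
      rw [show M+1-(i+1) = M-i by omega]
    · simp [Bi_zero_right' 1 _ le_rfl]
  rw [l1, l2, Finset.sum_congr rfl l3, Finset.sum_add_distrib, Finset.sum_congr rfl l4,
    ← Finset.mul_sum, l5, DS]
  ring

lemma DS_zero : DS 0 = 1 := by
  rw [DS, Finset.sum_range_one]
  simp [Bi_zero_right' 1 0 le_rfl]

lemma DS_one : DS 1 = 1 := by
  rw [DS, Finset.sum_range_succ, Finset.sum_range_one,
    show Bi 1 (1-1) 1 = 0 from Bi_of_gt (by omega),
    show Bi 1 (1-0) 0 = 1 from Bi_zero_right' 1 _ le_rfl]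
  simp

lemma tm_zero_eval (M : ℕ) (h0 : hh M 0 = 0) : tm M 0 = 1 := by
  rw [tm, if_pos (by omega), h0, Bi_zero_right' 1 _ le_rfl]
  have h1 : tt 0 = 0 := by norm_num [tt]
  rw [h1]
  norm_num [eps]

lemma ES_zero : ES 0 = 1 := by
  rw [ES]
  rw [sum_window' (a' := 0) (b' := 0) (by norm_num) (by norm_num) ?hv]
  case hv =>
    intro j hj
    rcases hj with hj | hj
    · exact tm_vanish_left 0 j (by omega)
    · exact tm_vanish_right 0 j (by omega)
  rw [Finset.Icc_self, Finset.sum_singleton]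
  exact tm_zero_eval 0 (by unfold hh; omega)

lemma ES_one : ES 1 = 1 := by
  rw [ES]
  rw [sum_window' (a' := -1) (b' := 0) (by norm_num) (by norm_num) ?hv]
  case hv =>
    intro j hj
    rcases hj with hj | hj
    · exact tm_vanish_left 1 j (by omega)
    · exact tm_vanish_right 1 j (by omega)
  have h := sum_Icc_eq_range (-1) 2 (tm 1)
  rw [show (-1:ℤ) + (2:ℕ) - 1 = 0 by norm_num] at h
  rw [h, Finset.sum_range_succ, Finset.sum_range_one]
  rw [show (-1:ℤ) + (0:ℕ) = -1 by norm_num, show (-1:ℤ) + (1:ℕ) = 0 by norm_num]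
  rw [tm_vanish_left 1 (-1) (by norm_num), tm_zero_eval 1 (by unfold hh; omega)]
  norm_num

theorem schur : ∀ M : ℕ, DS M = ES M := by
  intro M
  induction M using Nat.strong_induction_on with
  | _ M ih =>
      match M with
      | 0 => rw [DS_zero, ES_zero]
      | 1 => rw [DS_one, ES_one]
      | (M+2) => rw [DS_rec, ES_rec, ih M (by omega), ih (M+1) (by omega)]


/-! ### gluing helpers -/

lemma MD_poch (b K : ℕ) (hb : 1 ≤ b) {c a : ℕ} (hca : c ≤ a) (hK : K ≤ b*(c+1)) :
    MD K (poch b a) (poch b c) := by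
  induction a, hca using Nat.le_induction with
  | base => exact MD.refl K _
  | succ a hca ih =>
      rw [poch_succ]
      have h1 : MD K (1 - X ^ (b*(a+1))) 1 :=
        MD_one_sub_X_pow (le_trans hK (Nat.mul_le_mul_left b (by omega)))
      have := ih.mul h1
      rwa [mul_one] at this

lemma MD_mul_inv_poch (b K : ℕ) (hb : 1 ≤ b) {c a : ℕ} (hca : c ≤ a) (hK : K ≤ b*(c+1)) :
    MD K (poch b a * Ring.inverse (poch b c)) 1 := by
  have h := (MD_poch b K hb hca hK).mul_right (Ring.inverse (poch b c))
  rwa [Ring.mul_inverse_cancel _ (isUnit_poch b c hb)] at h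

lemma MD_inv_poch (b K : ℕ) (hb : 1 ≤ b) {c a : ℕ} (hca : c ≤ a) (hK : K ≤ b*(c+1)) :
    MD K (Ring.inverse (poch b a)) (Ring.inverse (poch b c)) :=
  MD.inv (isUnit_poch b a hb) (isUnit_poch b c hb) (MD_poch b K hb hca hK)

/-- uniformization of middle binomials -/
lemma Bi_MD_mid (b K c : ℕ) (hb : 1 ≤ b) (hK : K ≤ b*(c+1)) {n k k' : ℕ}
    (h1 : c ≤ k) (h2 : k + c ≤ n) (h3 : c ≤ k') (h4 : k' + c ≤ n) :
    MD K (Bi b n k) (Bi b n k') := by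
  have key : ∀ m : ℕ, c ≤ m → m + c ≤ n →
      MD K (Bi b n m) (poch b n * Ring.inverse (poch b c) * Ring.inverse (poch b c)) := by
    intro m hm1 hm2
    rw [Bi, if_pos (by omega)]
    exact ((MD.refl K (poch b n)).mul
      (MD_inv_poch b K hb hm1 hK)).mul (MD_inv_poch b K hb (by omega) hK)
  exact (key k h1 h2).trans (key k' h3 h4).symm


lemma j_bound1 (K : ℕ) (j : ℤ) (h : tt j < K) : 5*j ≤ 2*(K:ℤ) := by
  rcases le_or_gt j 0 with hj | hj
  · omega
  · have h2 := ttZ j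
    nlinarith [h2, hj, show (tt j : ℤ) < K by exact_mod_cast h]

lemma j_bound2 (K : ℕ) (j : ℤ) (h : tt j < K) : -5*j ≤ 2*(K:ℤ) := by
  rcases le_or_gt 0 j with hj | hj
  · omega
  · have h2 := ttZ j
    have h3 : (0:ℤ) ≤ (-(5*j+1)) * (-(j+1)) := mul_nonneg (by omega) (by omega)
    nlinarith [h2, h3, show (tt j : ℤ) < K by exact_mod_cast h]

lemma MD_term_zero (K : ℕ) (h : K ≤ tt j) (c : R) :
    MD K (eps j * X ^ tt j * c) 0 := by
  have h1 : eps j * X ^ tt j * c = X ^ tt j * (eps j * c) := by ring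
  rw [h1]
  exact MD_X_pow_mul h _

lemma MD_tm_unif (K : ℕ) (hK : 1 ≤ K) (j : ℤ) :
    MD K (tm (5*K) j) (eps j * X ^ tt j * Bi 1 (5*K) (2*K)) := by
  rcases le_or_gt K (tt j) with htt | htt
  · refine MD.trans ?_ (MD_term_zero K htt _).symm
    rw [tm]
    split
    · exact MD_term_zero K htt _
    · exact MD.refl K 0
  · have hb1 := j_bound1 K j htt
    have hb2 := j_bound2 K j htt
    have hg : 5*j ≤ ((5*K:ℕ):ℤ) := by push_cast; omega
    rw [tm, if_pos hg]
    have hhfact : 2 * (hh (5*K) j : ℤ) ≤ ((5*K:ℕ):ℤ) - 5*j ∧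
        ((5*K:ℕ):ℤ) - 5*j ≤ 2 * (hh (5*K) j : ℤ) + 1 := by
      unfold hh; push_cast; omega
    exact (MD.refl K (eps j * X ^ tt j)).mul
      (Bi_MD_mid 1 K K le_rfl (by omega) (by omega) (by omega) (by omega) (by omega))

lemma MD_ue_unif (K : ℕ) (hK : 1 ≤ K) (j : ℤ) :
    MD K (ue K j) (eps j * X ^ tt j * Bi 5 (2*K) K) := by
  rcases le_or_gt K (tt j) with htt | htt
  · refine MD.trans ?_ (MD_term_zero K htt _).symm
    rw [ue]
    split
    · exact MD_term_zero K htt _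
    · exact MD.refl K 0
  · have hb1 := j_bound1 K j htt
    have hb2 := j_bound2 K j htt
    have hg : -(K:ℤ) ≤ j := by omega
    rw [ue, if_pos hg]
    have hkk : ((K:ℤ) + j).toNat = ((K:ℤ) + j).toNat := rfl
    refine (MD.refl K (eps j * X ^ tt j)).mul
      (Bi_MD_mid 5 K ((K+4)/5) (by norm_num) (by omega) (by omega) (by omega) (by omega)
        (by omega))


def WW (K : ℕ) : R :=
  ∑ j ∈ Finset.Icc (-((5*K:ℕ):ℤ) - 1) (((5*K:ℕ):ℤ) + 1), eps j * X ^ tt j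

lemma MD_ES (K : ℕ) (hK : 1 ≤ K) :
    MD K (ES (5*K)) (WW K * Bi 1 (5*K) (2*K)) := by
  have h1 : MD K (ES (5*K))
      (∑ j ∈ Finset.Icc (-((5*K:ℕ):ℤ) - 1) (((5*K:ℕ):ℤ) + 1),
        eps j * X ^ tt j * Bi 1 (5*K) (2*K)) :=
    MD.sum (fun j _ => MD_tm_unif K hK j)
  rwa [← Finset.sum_mul] at h1

lemma MD_V (K : ℕ) (hK : 1 ≤ K) :
    MD K (Vprod K) (WW K * Bi 5 (2*K) K) := by
  have hwin : ∑ j ∈ Finset.Icc (-((5*K:ℕ):ℤ) - 1) (((5*K:ℕ):ℤ) + 1), ue K j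
      = ∑ j ∈ Finset.Icc (-(K:ℤ) - 1) ((K:ℤ) + 1), ue K j :=
    sum_window' (by push_cast; omega) (by push_cast; omega)
      (fun j hj => ue_vanish K j (by omega))
  have h1 : MD K (∑ j ∈ Finset.Icc (-((5*K:ℕ):ℤ) - 1) (((5*K:ℕ):ℤ) + 1), ue K j)
      (∑ j ∈ Finset.Icc (-((5*K:ℕ):ℤ) - 1) (((5*K:ℕ):ℤ) + 1),
        eps j * X ^ tt j * Bi 5 (2*K) K) :=
    MD.sum (fun j _ => MD_ue_unif K hK j)
  rw [hwin, jtp K] at h1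
  rwa [← Finset.sum_mul] at h1

lemma Qfun_eq (K : ℕ) :
    (∏ m ∈ Finset.range (5*K),
      (if (m+1) % 5 = 1 ∨ (m+1) % 5 = 4 then (1:R) else (1 - X^(m+1))))
      = poch 5 K * Vprod K := by
  induction K with
  | zero => simp [poch, Vprod]
  | succ K ih =>
      rw [show 5*(K+1) = 5*K + 5 by ring, Finset.prod_range_add, ih]
      rw [show (Finset.range 5) = Finset.range (4+1) by norm_num]
      rw [Finset.prod_range_succ, Finset.prod_range_succ, Finset.prod_range_succ,
        Finset.prod_range_succ, Finset.prod_range_one]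
      rw [if_pos (show (5*K+0+1) % 5 = 1 ∨ (5*K+0+1) % 5 = 4 by omega)]
      rw [if_neg (show ¬((5*K+1+1) % 5 = 1 ∨ (5*K+1+1) % 5 = 4) by omega)]
      rw [if_neg (show ¬((5*K+2+1) % 5 = 1 ∨ (5*K+2+1) % 5 = 4) by omega)]
      rw [if_pos (show (5*K+3+1) % 5 = 1 ∨ (5*K+3+1) % 5 = 4 by omega)]
      rw [if_neg (show ¬((5*K+4+1) % 5 = 1 ∨ (5*K+4+1) % 5 = 4) by omega)]
      rw [poch_succ]
      rw [show Vprod (K+1) = Vprod K * ((1 - X ^ (5*K+2)) * (1 - X ^ (5*K+3))) from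
        Finset.prod_range_succ _ K]
      rw [show 5*K+1+1 = 5*K+2 by ring, show 5*K+2+1 = 5*K+3 by ring,
        show 5*K+4+1 = 5*(K+1) by ring]
      ring

lemma MD_prod_side (K : ℕ) (hK : 1 ≤ K) :
    MD K ((∏ m ∈ Finset.range K,
        (if (m+1) % 5 = 1 ∨ (m+1) % 5 = 4 then Ring.inverse (1 - X^(m+1)) else 1))
        * poch 1 (5*K))
      (poch 5 K * Vprod K) := by
  have hsplit : poch 1 (5*K)
      = (∏ m ∈ Finset.range K, (1 - X^(m+1))) * ∏ i ∈ Finset.range (4*K), (1 - X^(K+i+1)) := by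
    rw [show 5*K = K + 4*K by ring, poch, Finset.prod_range_add]
    congr 1
    · exact Finset.prod_congr rfl (fun m _ => by rw [one_mul])
    · exact Finset.prod_congr rfl (fun i _ => by rw [show 1*(K+i+1) = K+i+1 by ring])
  rw [hsplit, ← mul_assoc, ← Finset.prod_mul_distrib]
  have hfac : ∀ m ∈ Finset.range K,
      (if (m+1) % 5 = 1 ∨ (m+1) % 5 = 4 then Ring.inverse (1 - X^(m+1)) else 1) * (1 - X^(m+1))
        = (if (m+1) % 5 = 1 ∨ (m+1) % 5 = 4 then (1:R) else (1 - X^(m+1))) := by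
    intro m _
    split
    · exact Ring.inverse_mul_cancel _ (isUnit_one_sub_X_pow (m+1) (by omega))
    · rw [one_mul]
  rw [Finset.prod_congr rfl hfac]
  have htail : MD K (∏ i ∈ Finset.range (4*K), (1 - X^(K+i+1)))
      (∏ i ∈ Finset.range (4*K), (1:R)) :=
    MD.prod (fun i _ => MD_one_sub_X_pow (by omega))
  rw [Finset.prod_const_one] at htail
  have h1 := (MD.refl K (∏ m ∈ Finset.range K,
      (if (m+1) % 5 = 1 ∨ (m+1) % 5 = 4 then (1:R) else (1 - X^(m+1))))).mul htail
  rw [mul_one] at h1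
  refine h1.trans ?_
  rw [← Qfun_eq K, show 5*K = K + 4*K by ring, Finset.prod_range_add]
  have htail2 : MD K (∏ i ∈ Finset.range (4*K),
      (if (K+i+1) % 5 = 1 ∨ (K+i+1) % 5 = 4 then (1:R) else (1 - X^(K+i+1))))
      (∏ i ∈ Finset.range (4*K), (1:R)) := by
    refine MD.prod ?_
    intro i _
    split
    · exact MD.refl K 1
    · exact MD_one_sub_X_pow (by omega)
  rw [Finset.prod_const_one] at htail2
  have h2 := (MD.refl K (∏ m ∈ Finset.range K,
      (if (m+1) % 5 = 1 ∨ (m+1) % 5 = 4 then (1:R) else (1 - X^(m+1))))).mul htail2.symm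
  rwa [mul_one] at h2


lemma MD_G (K : ℕ) (hK : 1 ≤ K) :
    MD K (Bi 1 (5*K) (2*K) * poch 1 (5*K)) (poch 5 K * Bi 5 (2*K) K) := by
  have u12 : IsUnit (poch 1 (2*K)) := isUnit_poch 1 _ le_rfl
  have u13 : IsUnit (poch 1 (3*K)) := isUnit_poch 1 _ le_rfl
  have u5K : IsUnit (poch 5 K) := isUnit_poch 5 _ (by norm_num)
  apply MD.cancel ((u12.mul u13).mul (u5K.mul u5K))
  have hL : (Bi 1 (5*K) (2*K) * poch 1 (5*K))
        * (poch 1 (2*K) * poch 1 (3*K) * (poch 5 K * poch 5 K))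
      = (poch 1 (5*K) * poch 1 (5*K)) * (poch 5 K * poch 5 K) := by
    rw [Bi, if_pos (by omega), show 5*K - 2*K = 3*K by omega]
    apply φ_inj
    simp only [map_mul, φ_inv u12, φ_inv u13]
    have n1 : φ (poch 1 (2*K)) ≠ 0 := φ_ne_zero u12
    have n2 : φ (poch 1 (3*K)) ≠ 0 := φ_ne_zero u13
    field_simp
  have hR : (poch 5 K * Bi 5 (2*K) K)
        * (poch 1 (2*K) * poch 1 (3*K) * (poch 5 K * poch 5 K))
      = (poch 5 (2*K) * poch 5 K) * (poch 1 (2*K) * poch 1 (3*K)) := by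
    rw [Bi, if_pos (by omega), show 2*K - K = K by omega]
    apply φ_inj
    simp only [map_mul, φ_inv u5K]
    have n1 : φ (poch 5 K) ≠ 0 := φ_ne_zero u5K
    field_simp
  rw [hL, hR]
  have q1 : MD K (poch 1 (5*K)) (poch 1 K) := MD_poch 1 K le_rfl (by omega) (by omega)
  have q2 : MD K (poch 1 (2*K)) (poch 1 K) := MD_poch 1 K le_rfl (by omega) (by omega)
  have q3 : MD K (poch 1 (3*K)) (poch 1 K) := MD_poch 1 K le_rfl (by omega) (by omega)
  have q4 : MD K (poch 5 K) (poch 5 ((K+4)/5)) := MD_poch 5 K (by norm_num) (by omega) (by omega)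
  have q5 : MD K (poch 5 (2*K)) (poch 5 ((K+4)/5)) :=
    MD_poch 5 K (by norm_num) (by omega) (by omega)
  have hA := (q1.mul q1).mul (q4.mul q4)
  have hB := (q5.mul q4).mul (q2.mul q3)
  have hcomm : poch 5 ((K+4)/5) * poch 5 ((K+4)/5) * (poch 1 K * poch 1 K)
      = poch 1 K * poch 1 K * (poch 5 ((K+4)/5) * poch 5 ((K+4)/5)) := by ring
  rw [hcomm] at hB
  exact hA.trans hB.symm

lemma MD_DS (K : ℕ) (hK : 1 ≤ K) :
    MD K (DS (5*K)) (∑ n ∈ Finset.range K, X^(n^2) * Ring.inverse (poch 1 n)) := by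
  have step1 : MD K (DS (5*K))
      (∑ n ∈ Finset.range (5*K+1),
        if n < K then X^(n^2) * Ring.inverse (poch 1 n) else 0) := by
    rw [DS]
    refine MD.sum ?_
    intro n hn
    simp only [Finset.mem_range] at hn
    by_cases hnK : n < K
    · rw [if_pos hnK, Bi, if_pos (by omega)]
      have hmid : MD K (poch 1 (5*K - n) * Ring.inverse (poch 1 (5*K - n - n))) 1 :=
        MD_mul_inv_poch 1 K le_rfl (by omega) (by omega)
      have harr : poch 1 (5*K-n) * Ring.inverse (poch 1 n) * Ring.inverse (poch 1 (5*K-n-n))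
          = (poch 1 (5*K-n) * Ring.inverse (poch 1 (5*K-n-n))) * Ring.inverse (poch 1 n) := by
        ring
      rw [harr]
      have h2 := hmid.mul (MD.refl K (Ring.inverse (poch 1 n)))
      rw [one_mul] at h2
      exact (MD.refl K (X^(n^2))).mul h2
    · rw [if_neg hnK]
      have he : K ≤ n^2 := le_trans (by omega) (Nat.le_self_pow (by norm_num) n)
      exact MD_X_pow_mul he _
  have step2 : (∑ n ∈ Finset.range (5*K+1),
        if n < K then X^(n^2) * Ring.inverse (poch 1 n) else 0)
      = ∑ n ∈ Finset.range K, X^(n^2) * Ring.inverse (poch 1 n) := by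
    rw [← Finset.sum_subset
      (show Finset.range K ⊆ Finset.range (5*K+1) from Finset.range_subset_range.mpr (by omega))
      (fun x _ hx => if_neg (by simpa using hx))]
    exact Finset.sum_congr rfl (fun n hn => if_pos (Finset.mem_range.mp hn))
  rw [step2] at step1
  exact step1

lemma qPoch_eq (n : ℕ) : qPoch n = poch 1 n :=
  Finset.prod_congr rfl (fun i _ => by rw [one_mul])

end

end RR

open RR in
/-- The Rogers–Ramanujan identity
`Σ_{n≥0} q^{n²}/(q)_n = ∏_{n≥1, n≡±1 mod 5} (1−qⁿ)⁻¹` in `ℤ[[q]]`,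
stated coefficientwise: for each `N`, truncating the sum at `n ≤ N` and the
product at factors `1 ≤ m ≤ N+1` computes the exact `N`-th coefficient of both
sides (terms with `n > N` have order `n² > N`, and factors with `m > N` are
`≡ 1 mod q^{N+1}`).  Inverses are the inverses in `ℤ[[q]]` (via `Ring.inverse`,
which is the genuine inverse since all these series have constant term `1`). -/
theorem stmt11 (N : ℕ) :
    (PowerSeries.coeff (R := ℤ) N)
        (∑ n ∈ Finset.range (N + 1),
          (PowerSeries.X : PowerSeries ℤ) ^ (n ^ 2) * Ring.inverse (qPoch n))
      =
    (PowerSeries.coeff (R := ℤ) N)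
        (∏ m ∈ Finset.range (N + 1),
          if (m + 1) % 5 = 1 ∨ (m + 1) % 5 = 4 then
            Ring.inverse (1 - (PowerSeries.X : PowerSeries ℤ) ^ (m + 1))
          else 1) := by
  have hK : 1 ≤ N + 1 := by omega
  apply MD_coeff
  simp only [qPoch_eq]
  apply MD.cancel (isUnit_poch 1 (5*(N+1)) le_rfl)
  have hS : MD (N+1) (∑ n ∈ Finset.range (N + 1),
      (PowerSeries.X : PowerSeries ℤ) ^ (n ^ 2) * Ring.inverse (poch 1 n)) (ES (5*(N+1))) := by
    have h := (MD_DS (N+1) hK).symm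
    rw [schur (5*(N+1))] at h
    exact h
  have hchain1 := (hS.trans (MD_ES (N+1) hK)).mul_right (poch 1 (5*(N+1)))
  have hmid : MD (N+1) (WW (N+1) * Bi 1 (5*(N+1)) (2*(N+1)) * poch 1 (5*(N+1)))
      (WW (N+1) * (poch 5 (N+1) * Bi 5 (2*(N+1)) (N+1))) := by
    have h := (MD.refl (N+1) (WW (N+1))).mul (MD_G (N+1) hK)
    rw [← mul_assoc] at h
    exact h
  have hV : MD (N+1) (WW (N+1) * (poch 5 (N+1) * Bi 5 (2*(N+1)) (N+1)))
      (poch 5 (N+1) * Vprod (N+1)) := by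
    have harr : WW (N+1) * (poch 5 (N+1) * Bi 5 (2*(N+1)) (N+1))
        = poch 5 (N+1) * (WW (N+1) * Bi 5 (2*(N+1)) (N+1)) := by ring
    rw [harr]
    exact MD.mul_left _ (MD_V (N+1) hK).symm
  exact ((hchain1.trans hmid).trans hV).trans (MD_prod_side (N+1) hK).symm
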